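/- The double integral -(1/8)∫_{-1}^{1}∫_{-1}^{1} log(1-xy) dx dy equals 1 - π²/16 - (log 2)/2. -/

import Mathlib

open MeasureTheory Real Filter Finset Topology

lemma summable_aux : Summable (fun m : ℕ => (1:ℝ)/((m:ℝ)+1)^2) := by
  have h : Summable (fun m : ℕ => (1:ℝ)/(m:ℝ)^2) :=
    Real.summable_one_div_nat_pow.2 one_lt_two
  have := (summable_nat_add_iff 1).2 h
  refine this.congr fun m => ?_
  push_cast
  ring

lemma partial_sum_eq (N : ℕ) :
    ∑ m ∈ range N, (1:ℝ)/((2*m+2)*(2*m+3))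
      = 1 + (harmonic N : ℝ) - (harmonic (2*N+1) : ℝ) := by
  induction N with
  | zero => simp [harmonic_succ]
  | succ N ih =>
      rw [Finset.sum_range_succ, ih]
      have h1 : 2*(N+1)+1 = (2*N+1)+1+1 := by ring
      rw [h1, harmonic_succ (2*N+1+1), harmonic_succ (2*N+1), harmonic_succ N]
      push_cast
      have h2 : ((2:ℝ)*N+2) ≠ 0 := by positivity
      have h3 : ((2:ℝ)*N+3) ≠ 0 := by positivity
      have h4 : ((N:ℝ)+1) ≠ 0 := by positivity
      field_simp
      ring

lemma tendsto_H : Tendsto (fun N : ℕ => (harmonic (2*N+1) : ℝ) - (harmonic N : ℝ))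
    atTop (𝓝 (Real.log 2)) := by
  have h2 : Tendsto (fun N : ℕ => 2*N+1) atTop atTop :=
    StrictMono.tendsto_atTop (fun a b hab => by omega)
  have hA : Tendsto (fun N : ℕ => (harmonic (2*N+1) : ℝ) - Real.log (2*N+1)) atTop
      (𝓝 Real.eulerMascheroniConstant) := by
    have := Real.tendsto_harmonic_sub_log.comp h2
    refine this.congr fun N => ?_
    simp only [Function.comp]
    push_cast
    ring_nf
  have hB := Real.tendsto_harmonic_sub_log
  have hlog : Tendsto (fun N : ℕ => Real.log (2 + 1/(N:ℝ))) atTop (𝓝 (Real.log 2)) := by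
    have : Tendsto (fun N : ℕ => 2 + 1/(N:ℝ)) atTop (𝓝 2) := by
      simpa using (tendsto_const_nhds (x := (2:ℝ))).add
        (tendsto_one_div_atTop_nhds_zero_nat)
    exact (this.log (by norm_num))
  have := (hA.sub hB).add hlog
  rw [sub_self, zero_add] at this
  refine this.congr' ?_
  filter_upwards [eventually_ge_atTop 1] with N hN
  have hN0 : (N:ℝ) ≠ 0 := by positivity
  have h21 : ((2:ℝ)*N+1) ≠ 0 := by positivity
  have : Real.log (2 + 1/(N:ℝ)) = Real.log (2*N+1) - Real.log N := by
    rw [← Real.log_div h21 hN0]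
    congr 1
    field_simp
  rw [this]
  push_cast
  ring

lemma hasSum_A : HasSum (fun m : ℕ => (1:ℝ)/((2*m+2)*(2*m+3))) (1 - Real.log 2) := by
  have hsum : Summable (fun m : ℕ => (1:ℝ)/((2*m+2)*(2*m+3))) := by
    refine Summable.of_nonneg_of_le (fun m => by positivity) (fun m => ?_) summable_aux
    refine one_div_le_one_div_of_le (by positivity) ?_
    nlinarith [Nat.cast_nonneg (α := ℝ) m]
  rw [hsum.hasSum_iff_tendsto_nat]
  have := (tendsto_const_nhds (x := (1:ℝ))).sub tendsto_H
  refine this.congr fun N => ?_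
  rw [partial_sum_eq]
  ring


lemma hasSum_oddsq : HasSum (fun m : ℕ => (1:ℝ)/(2*(m:ℝ)+1)^2) (π^2/8) := by
  have h : HasSum (fun n : ℕ => (1:ℝ)/(n:ℝ)^2) (π^2/6) := hasSum_zeta_two
  have he : HasSum (fun k : ℕ => (1:ℝ)/((2*k : ℕ):ℝ)^2) (π^2/24) := by
    have h4 := h.mul_left (1/4)
    have hfun : (fun k : ℕ => (1/4) * ((1:ℝ)/(k:ℝ)^2))
        = fun k : ℕ => (1:ℝ)/((2*k : ℕ):ℝ)^2 := by
      funext k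
      push_cast
      rcases eq_or_ne (k:ℝ) 0 with hk | hk
      · simp [hk]
      · field_simp
        ring
    rw [hfun] at h4
    rw [show (π^2/24 : ℝ) = 1/4 * (π^2/6) by ring]
    exact h4
  have hinj : Function.Injective (fun k : ℕ => 2*k+1) := by
    intro a b hab
    simp only at hab
    omega
  obtain ⟨x, hx⟩ := h.summable.comp_injective hinj
  have hx' : HasSum (fun k : ℕ => (1:ℝ)/((2*k+1 : ℕ):ℝ)^2) x := hx
  have htot := HasSum.even_add_odd (f := fun n : ℕ => (1:ℝ)/(n:ℝ)^2) he hx'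
  have hxval : x = π^2/8 := by
    have := h.unique htot
    linarith
  rw [hxval] at hx'
  have hfun2 : (fun k : ℕ => (1:ℝ)/((2*k+1 : ℕ):ℝ)^2)
      = fun m : ℕ => (1:ℝ)/(2*(m:ℝ)+1)^2 := by
    funext k; push_cast; ring_nf
  rwa [hfun2] at hx'

lemma hasSum_B : HasSum (fun m : ℕ => (1:ℝ)/(2*(m:ℝ)+3)^2) (π^2/8 - 1) := by
  have h := hasSum_oddsq
  have h2 := (hasSum_nat_add_iff (f := fun m : ℕ => (1:ℝ)/(2*(m:ℝ)+1)^2)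
      (g := π^2/8 - 1) 1).2 (by rw [show π^2/8 - 1 + ∑ i ∈ range 1, (fun m : ℕ => (1:ℝ)/(2*(m:ℝ)+1)^2) i = π^2/8 by norm_num]; exact h)
  have hfun : (fun m : ℕ => (1:ℝ)/(2*((m+1 : ℕ):ℝ)+1)^2)
      = fun m : ℕ => (1:ℝ)/(2*(m:ℝ)+3)^2 := by
    funext m; push_cast; ring_nf
  rwa [hfun] at h2

lemma hasSum_final :
    HasSum (fun n : ℕ => -(((1 - (-1:ℝ)^n)/((n:ℝ)+2))^2)/((n:ℝ)+1))
      (π^2/2 + 4*Real.log 2 - 8) := by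
  have hC := ((hasSum_A.mul_left 4).sub (hasSum_B.mul_left 4)).neg
  have hfun : (fun m : ℕ => -(4 * ((1:ℝ)/((2*m+2)*(2*m+3))) - 4 * ((1:ℝ)/(2*(m:ℝ)+3)^2)))
      = fun m : ℕ => -(((1 - (-1:ℝ)^(2*m+1))/(((2*m+1 : ℕ):ℝ)+2))^2)/(((2*m+1 : ℕ):ℝ)+1) := by
    funext m
    have h1 : ((-1:ℝ))^(2*m+1) = -1 := Odd.neg_one_pow ⟨m, rfl⟩
    rw [h1]
    push_cast
    have h2 : (2*(m:ℝ)+2) ≠ 0 := by positivity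
    have h3 : (2*(m:ℝ)+3) ≠ 0 := by positivity
    field_simp
    ring
  rw [hfun] at hC
  have hval : -(4 * (1 - Real.log 2) - 4 * (π^2/8 - 1)) = π^2/2 + 4*Real.log 2 - 8 := by ring
  rw [hval] at hC
  have hinj : Function.Injective (fun m : ℕ => 2*m+1) := by
    intro a b hab; simp only at hab; omega
  refine (Function.Injective.hasSum_iff hinj ?_).1 hC
  intro n hn
  have hev : Even n := by
    rcases Nat.even_or_odd n with h | h
    · exact h
    · exact absurd ⟨h.choose, by simp [h.choose_spec.symm]⟩ hn
  have : ((-1:ℝ))^n = 1 := hev.neg_one_pow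
  simp [this]



noncomputable def ee (n : ℕ) : ℝ := (1 - (-1:ℝ)^n)/((n:ℝ)+2)

lemma ee_nonneg (n : ℕ) : 0 ≤ ee n := by
  unfold ee
  rcases Nat.even_or_odd n with h | h
  · simp [h.neg_one_pow]
  · rw [h.neg_one_pow]
    positivity

lemma ee_le (n : ℕ) : ee n ≤ 2/((n:ℝ)+2) := by
  unfold ee
  rcases Nat.even_or_odd n with h | h
  · rw [h.neg_one_pow]
    norm_num
    positivity
  · rw [h.neg_one_pow]
    norm_num

lemma integral_pow_eval (n : ℕ) : ∫ x in (-1:ℝ)..1, x^(n+1) = ee n := by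
  rw [integral_pow]
  unfold ee
  have h1 : ((-1:ℝ))^(n+1+1) = (-1:ℝ)^n := by
    rw [pow_succ, pow_succ]; ring
  rw [h1, one_pow]
  push_cast
  ring_nf

lemma abs_le_one_of_mem {y : ℝ} (hy : y ∈ Set.uIoc (-1:ℝ) 1) : |y| ≤ 1 := by
  rw [Set.uIoc_of_le (by norm_num : (-1:ℝ) ≤ 1)] at hy
  rw [abs_le]; exact ⟨hy.1.le, hy.2⟩

lemma inner_hasSum (x : ℝ) (hx : |x| < 1) :
    HasSum (fun n : ℕ => -(x^(n+1))/((n:ℝ)+1) * ee n)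
      (∫ y in (-1:ℝ)..1, Real.log (1 - x*y)) := by
  have hsummable : Summable (fun n : ℕ => |x|^(n+1)) := by
    refine ((summable_geometric_of_lt_one (abs_nonneg x) hx).mul_left |x|).congr fun n => ?_
    rw [pow_succ]; ring
  have H := intervalIntegral.hasSum_integral_of_dominated_convergence
    (μ := volume) (a := (-1:ℝ)) (b := 1)
    (F := fun (n : ℕ) (y : ℝ) => -((x*y)^(n+1)/((n:ℝ)+1)))
    (f := fun y => Real.log (1 - x*y))
    (bound := fun n _ => |x|^(n+1))
    (fun n => (Continuous.aestronglyMeasurable (by fun_prop)).restrict)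
    (fun n => ae_of_all _ fun y hy => ?_)
    (ae_of_all _ fun y _ => hsummable)
    (intervalIntegrable_const)
    (ae_of_all _ fun y hy => ?_)
  · refine H.congr_fun fun n => ?_
    have hfun : (fun y : ℝ => -((x*y)^(n+1)/((n:ℝ)+1)))
        = fun y : ℝ => (-(x^(n+1))/((n:ℝ)+1)) * y^(n+1) := by
      funext y
      rw [mul_pow]
      ring
    rw [hfun, intervalIntegral.integral_const_mul, integral_pow_eval]
  · -- bound
    have hy1 : |y| ≤ 1 := abs_le_one_of_mem hy
    have h1 : ‖-((x*y)^(n+1)/((n:ℝ)+1))‖ = |x*y|^(n+1)/((n:ℝ)+1) := by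
      rw [norm_neg, norm_div, norm_pow]
      simp [abs_of_nonneg (by positivity : (0:ℝ) ≤ (n:ℝ)+1), abs_mul]
    rw [h1]
    have hxy : |x*y| ≤ |x| := by
      rw [abs_mul]
      nlinarith [abs_nonneg x, abs_nonneg y]
    have h3 : (1:ℝ) ≤ (n:ℝ)+1 := by
      have := Nat.cast_nonneg (α := ℝ) n; linarith
    calc |x*y|^(n+1)/((n:ℝ)+1) ≤ |x|^(n+1)/1 := by gcongr
      _ = |x|^(n+1) := div_one _
  · -- hasSum pointwise
    have hy1 : |y| ≤ 1 := abs_le_one_of_mem hy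
    have hxy : |x*y| < 1 := by
      refine lt_of_le_of_lt ?_ hx
      rw [abs_mul]
      nlinarith [abs_nonneg x, abs_nonneg y]
    simpa using (hasSum_pow_div_log_of_abs_lt_one hxy).neg

lemma summable_aux' : Summable (fun m : ℕ => (1:ℝ)/((m:ℝ)+1)^2) := by
  have h : Summable (fun m : ℕ => (1:ℝ)/(m:ℝ)^2) :=
    Real.summable_one_div_nat_pow.2 one_lt_two
  have := (summable_nat_add_iff 1).2 h
  refine this.congr fun m => ?_
  push_cast
  ring

lemma outer_hasSum :
    HasSum (fun n : ℕ => -((ee n)^2)/((n:ℝ)+1))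
      (∫ x in (-1:ℝ)..1, ∫ y in (-1:ℝ)..1, Real.log (1 - x*y)) := by
  have hne : ∀ᵐ x : ℝ ∂volume, x ≠ 1 := by
    rw [ae_iff]
    simp only [ne_eq, not_not, Set.setOf_eq_eq_singleton]
    exact measure_singleton 1
  have hsum2 : Summable (fun n : ℕ => 2/((n:ℝ)+1)^2) := by
    refine (summable_aux'.mul_left 2).congr fun n => ?_
    ring
  have H := intervalIntegral.hasSum_integral_of_dominated_convergence
    (μ := volume) (a := (-1:ℝ)) (b := 1)
    (F := fun (n : ℕ) (x : ℝ) => -(x^(n+1))/((n:ℝ)+1) * ee n)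
    (f := fun x => ∫ y in (-1:ℝ)..1, Real.log (1 - x*y))
    (bound := fun n _ => 2/((n:ℝ)+1)^2)
    (fun n => (Continuous.aestronglyMeasurable (by fun_prop)).restrict)
    (fun n => ae_of_all _ fun x hx => ?_)
    (ae_of_all _ fun x _ => hsum2)
    (intervalIntegrable_const)
    ?_
  · refine H.congr_fun fun n => ?_
    have hfun : (fun x : ℝ => -(x^(n+1))/((n:ℝ)+1) * ee n)
        = fun x : ℝ => (-(ee n)/((n:ℝ)+1)) * x^(n+1) := by
      funext x; ring
    rw [hfun, intervalIntegral.integral_const_mul, integral_pow_eval]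
    ring
  · -- bound
    have hx1 : |x| ≤ 1 := abs_le_one_of_mem hx
    have h0 : (0:ℝ) < (n:ℝ)+1 := by positivity
    have h1 : |x|^(n+1) ≤ 1 := pow_le_one₀ (abs_nonneg x) hx1
    have h2 : ‖-(x^(n+1))/((n:ℝ)+1) * ee n‖ = |x|^(n+1)/((n:ℝ)+1) * ee n := by
      rw [norm_mul, norm_div, norm_neg, norm_pow]
      simp [Real.norm_eq_abs, abs_of_nonneg h0.le, abs_of_nonneg (ee_nonneg n)]
    rw [h2]
    have h3 : (n:ℝ)+1 ≤ (n:ℝ)+2 := by linarith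
    calc |x|^(n+1)/((n:ℝ)+1) * ee n ≤ 1/((n:ℝ)+1) * (2/((n:ℝ)+2)) := by
          gcongr <;> first | exact ee_nonneg n | exact ee_le n | exact h1 | positivity
      _ ≤ 1/((n:ℝ)+1) * (2/((n:ℝ)+1)) := by gcongr
      _ = 2/((n:ℝ)+1)^2 := by
          rw [div_mul_div_comm, one_mul, pow_two]
  · -- h_lim
    filter_upwards [hne] with x hxne hmem
    rw [Set.uIoc_of_le (by norm_num : (-1:ℝ) ≤ 1)] at hmem
    have hx : |x| < 1 := by
      rw [abs_lt]
      exact ⟨by linarith [hmem.1], lt_of_le_of_ne hmem.2 hxne⟩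
    exact inner_hasSum x hx


theorem log_energy_integral :
    -(1/8) * ∫ x in (-1:ℝ)..1, ∫ y in (-1:ℝ)..1, Real.log (1 - x*y)
      = 1 - Real.pi^2/16 - Real.log 2 / 2 := by
  have h2 : HasSum (fun n : ℕ => -((ee n)^2)/((n:ℝ)+1)) (π^2/2 + 4*Real.log 2 - 8) := by
    unfold ee
    exact hasSum_final
  have hI : (∫ x in (-1:ℝ)..1, ∫ y in (-1:ℝ)..1, Real.log (1 - x*y))
      = π^2/2 + 4*Real.log 2 - 8 := outer_hasSum.unique h2
  rw [hI]
  ring
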